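/- Let J(x) = |x - x*|² + 3 sin(|x - x*|)² + 1 on ℝⁿ. Then there exists μ > 0 such that |∇J(x)|² ≥ 4μ²|x - x*|² for all x ∈ ℝⁿ; consequently ∇J(x) = 0 if and only if x = x*, and x* is the unique global minimizer of J. -/

import Mathlib

open Real

private lemma sin_two_mul_ge {r : ℝ} (hr : 0 < r) : -(r/2) ≤ Real.sin (2*r) := by
  rcases le_or_gt (2*r) π with h | h
  · have := Real.sin_nonneg_of_nonneg_of_le_pi (by linarith : (0:ℝ) ≤ 2*r) h
    linarith
  · rcases le_or_gt (2*r) (4*π/3) with h2 | h2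
    · have hs := Real.sin_le (x := 2*r - π) (by linarith)
      have he : Real.sin (2*r - π) = -Real.sin (2*r) := Real.sin_sub_pi _
      linarith
    · have h3 := Real.neg_one_le_sin (2*r)
      have hπ := Real.pi_gt_three
      linarith

private lemma hasGradient_ne {n : ℕ} (xs x : EuclideanSpace ℝ (Fin n)) (hx : x ≠ xs) :
    HasGradientAt (fun z => ‖z - xs‖ ^ 2 + 3 * Real.sin ‖z - xs‖ ^ 2 + 1)
      (((2 * ‖x - xs‖ + 3 * Real.sin (2 * ‖x - xs‖)) / ‖x - xs‖) • (x - xs)) x := by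
  set y := x - xs with hy
  have hy0 : y ≠ 0 := sub_ne_zero.mpr hx
  set r := ‖y‖ with hrdef
  have hr : 0 < r := norm_pos_iff.mpr hy0
  have hsub : HasFDerivAt (fun z : EuclideanSpace ℝ (Fin n) => z - xs)
      (ContinuousLinearMap.id ℝ _) x := (hasFDerivAt_id x).sub_const xs
  have hnsq := hsub.norm_sq
  have hsq : HasDerivAt Real.sqrt (1 / (2 * r)) (r ^ 2) := by
    have h := Real.hasDerivAt_sqrt (x := r ^ 2) (by positivity)
    rwa [Real.sqrt_sq hr.le] at h
  have hnorm' := hsq.comp_hasFDerivAt x hnsq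
  have heq : (fun z : EuclideanSpace ℝ (Fin n) => Real.sqrt (‖z - xs‖ ^ 2))
      = fun z => ‖z - xs‖ := funext fun z => Real.sqrt_sq (norm_nonneg _)
  simp only [Function.comp_def] at hnorm'
  rw [heq] at hnorm'
  have h1 : HasDerivAt (fun t : ℝ => t ^ 2) (2 * r) r := by
    simpa using hasDerivAt_pow 2 r
  have h2 := ((Real.hasDerivAt_sin r).pow 2).const_mul (3:ℝ)
  have hF : HasDerivAt (fun t : ℝ => t ^ 2 + 3 * Real.sin t ^ 2 + 1)
      (2 * r + 3 * (2 * Real.sin r * Real.cos r)) r := by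
    refine ((h1.add h2).add_const 1).congr_deriv ?_
    norm_num
  have hJ' := hF.comp_hasFDerivAt x hnorm'
  rw [hasGradientAt_iff_hasFDerivAt]
  refine hJ'.congr_fderiv ?_
  apply ContinuousLinearMap.ext
  intro v
  simp only [InnerProductSpace.toDual_apply_apply, real_inner_smul_left,
    ContinuousLinearMap.coe_smul', Pi.smul_apply, ContinuousLinearMap.coe_comp',
    Function.comp_apply, ContinuousLinearMap.coe_id', id_eq, smul_eq_mul, innerSL_apply_apply,
    Real.sin_two_mul, ContinuousLinearMap.smul_apply, nsmul_eq_mul, Nat.cast_ofNat]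
  field_simp
  simp only [hy, PiLp.sub_apply]

private lemma hasGradient_at_min {n : ℕ} (xs : EuclideanSpace ℝ (Fin n)) :
    HasGradientAt (fun z => ‖z - xs‖ ^ 2 + 3 * Real.sin ‖z - xs‖ ^ 2 + 1) 0 xs := by
  rw [hasGradientAt_iff_isLittleO]
  have ht : Filter.Tendsto (fun z : EuclideanSpace ℝ (Fin n) => z - xs) (nhds xs) (nhds 0) := by
    have hc : Continuous (fun z : EuclideanSpace ℝ (Fin n) => z - xs) :=
      continuous_id.sub continuous_const
    simpa using hc.tendsto xs
  have h1 : (fun z : EuclideanSpace ℝ (Fin n) => ‖z - xs‖ ^ 2) =o[nhds xs] fun z => z - xs := by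
    exact
      (Asymptotics.isLittleO_norm_pow_id (E' := EuclideanSpace ℝ (Fin n)) one_lt_two).comp_tendsto ht
  refine Asymptotics.IsBigO.trans_isLittleO ?_ h1
  apply Asymptotics.IsBigO.of_bound 4
  filter_upwards with z
  have hb : Real.sin ‖z - xs‖ ^ 2 ≤ ‖z - xs‖ ^ 2 := Real.sin_sq_le_sq
  have hnn : (0:ℝ) ≤ Real.sin ‖z - xs‖ ^ 2 := sq_nonneg _
  have hnn2 : (0:ℝ) ≤ ‖z - xs‖ ^ 2 := sq_nonneg _
  simp only [sub_self, norm_zero, Real.sin_zero, inner_zero_left, sub_zero]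
  rw [Real.norm_eq_abs, Real.norm_eq_abs, abs_of_nonneg hnn2, abs_le]
  constructor <;> nlinarith

theorem nonconvex_cost_gradient_lower_bound {n : ℕ} (xs : EuclideanSpace ℝ (Fin n))
    (J : EuclideanSpace ℝ (Fin n) → ℝ)
    (hJ : ∀ x, J x = ‖x - xs‖ ^ 2 + 3 * Real.sin ‖x - xs‖ ^ 2 + 1) :
    ∃ μ > (0:ℝ),
      (∀ x, 4 * μ ^ 2 * ‖x - xs‖ ^ 2 ≤ ‖gradient J x‖ ^ 2) ∧
      (∀ x, gradient J x = 0 ↔ x = xs) ∧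
      (∀ x, x ≠ xs → J xs < J x) := by
  have hJfun : J = fun z => ‖z - xs‖ ^ 2 + 3 * Real.sin ‖z - xs‖ ^ 2 + 1 := funext hJ
  subst hJfun
  have hgrad0 : gradient (fun z => ‖z - xs‖ ^ 2 + 3 * Real.sin ‖z - xs‖ ^ 2 + 1) xs = 0 :=
    (hasGradient_at_min xs).gradient
  have key : ∀ x, x ≠ xs →
      (1/4 : ℝ) * ‖x - xs‖ ^ 2 ≤
        ‖gradient (fun z => ‖z - xs‖ ^ 2 + 3 * Real.sin ‖z - xs‖ ^ 2 + 1) x‖ ^ 2 := by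
    intro x hx
    have hg := (hasGradient_ne xs x hx).gradient
    rw [hg]
    set r := ‖x - xs‖ with hrdef
    have hr : 0 < r := by
      rw [hrdef, norm_pos_iff]; exact sub_ne_zero.mpr hx
    have hsin := sin_two_mul_ge hr
    have hc : (1/2 : ℝ) ≤ (2 * r + 3 * Real.sin (2 * r)) / r := by
      rw [le_div_iff₀ hr]
      linarith
    rw [norm_smul, mul_pow, Real.norm_eq_abs]
    have habs : (1/2 : ℝ) ≤ |(2 * r + 3 * Real.sin (2 * r)) / r| :=
      le_trans hc (le_abs_self _)
    have h14 : (1/4 : ℝ) ≤ |(2 * r + 3 * Real.sin (2 * r)) / r| ^ 2 := by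
      nlinarith [abs_nonneg ((2 * r + 3 * Real.sin (2 * r)) / r)]
    have := mul_le_mul_of_nonneg_right h14 (sq_nonneg r)
    linarith
  refine ⟨1/4, by norm_num, ?_, ?_, ?_⟩
  · intro x
    by_cases hx : x = xs
    · subst hx; simp
    · have := key x hx
      calc 4 * (1/4:ℝ)^2 * ‖x - xs‖^2 = (1/4) * ‖x - xs‖^2 := by ring
        _ ≤ _ := this
  · intro x
    constructor
    · intro h
      by_contra hx
      have := key x hx
      rw [h] at this
      simp at this
      have hr : 0 < ‖x - xs‖ := by rw [norm_pos_iff]; exact sub_ne_zero.mpr hx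
      nlinarith
    · intro h; subst h; exact hgrad0
  · intro x hx
    have hr : 0 < ‖x - xs‖ := by rw [norm_pos_iff]; exact sub_ne_zero.mpr hx
    have hnn : (0:ℝ) ≤ Real.sin ‖x - xs‖ ^ 2 := sq_nonneg _
    simp only [sub_self, norm_zero, Real.sin_zero]
    nlinarith
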